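/- arXiv:1604.01101 — 2 statements merged into one kernel-verified Lean document; each statement's English description precedes it below -/
import Mathlib

section
/- Let I ⊆ R be an S_n-stable homogeneous ideal and V ⊆ I a graded S_n-stable subspace mapping isomorphically onto I/mI (an equivariant lift), where m = (x_1,...,x_n). If V contains a direct sum of at least two (possibly isomorphic) nontrivial irreducible S_n-subrepresentations, then I is not a complete intersection. -/
open MvPolynomial

noncomputable section

/-- An ideal is a complete intersection if it is generated by a regular sequence. -/
def IsCompleteIntersection {A : Type*} [CommRing A] (I : Ideal A) : Prop :=
  ∃ rs : List A, RingTheory.Sequence.IsRegular A rs ∧ Ideal.span {r | r ∈ rs} = I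

/-- A subspace of `k[x_1,…,x_n]` is `S_n`-stable if it is closed under
permutations of the variables. -/
def Stable {k : Type*} [Field k] {n : ℕ}
    (W : Submodule k (MvPolynomial (Fin n) k)) : Prop :=
  ∀ σ : Equiv.Perm (Fin n), ∀ p ∈ W, rename (⇑σ) p ∈ W


/-- For an ideal `J` of `R`, `J • ⊤ = J` as submodules of `R`. -/
lemma idealSmulTop {R : Type*} [CommRing R] (J : Ideal R) :
    (J • (⊤ : Submodule R R)) = J := by
  conv_lhs => rw [← Ideal.span_eq J]
  rw [Submodule.span_smul_eq, Submodule.set_smul_top_eq_span, Ideal.span_eq]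

/-- Koszul-type fact: every syzygy of a weakly regular sequence has all its
coefficients in the ideal generated by the sequence. -/
lemma factK {R : Type*} [CommRing R] :
    ∀ (c : ℕ) (r : Fin c → R), RingTheory.Sequence.IsWeaklyRegular R (List.ofFn r) →
      ∀ (a : Fin c → R), (∑ i, a i * r i) = 0 → ∀ i, a i ∈ Ideal.span (Set.range r) := by
  intro c
  induction c with
  | zero => exact fun r _ a _ i => i.elim0
  | succ c ih =>
    intro r hreg a hrel
    set rl := r (Fin.last c) with hrl
    set rc : Fin c → R := fun i => r i.castSucc with hrc
    have hofn : List.ofFn r = List.ofFn rc ++ [rl] := by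
      rw [List.ofFn_succ']; rw [List.concat_eq_append]
    rw [hofn, RingTheory.Sequence.isWeaklyRegular_append_iff] at hreg
    obtain ⟨hreg1, hreg2⟩ := hreg
    rw [RingTheory.Sequence.isWeaklyRegular_singleton_iff] at hreg2
    set J : Ideal R := Ideal.span (Set.range rc) with hJ
    have hJof : Ideal.ofList (List.ofFn rc) = J := by
      have h : {x | x ∈ List.ofFn rc} = Set.range rc := by
        ext x; simp [List.mem_ofFn]
      show Ideal.span _ = J
      rw [h]
    rw [Fin.sum_univ_castSucc] at hrel
    have hsub : Set.range rc ⊆ Set.range r := by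
      rintro _ ⟨i, rfl⟩; exact ⟨i.castSucc, rfl⟩
    have hmem : a (Fin.last c) * rl ∈ J := by
      have h : a (Fin.last c) * rl = -∑ i : Fin c, a i.castSucc * rc i :=
        eq_neg_of_add_eq_zero_right hrel
      rw [h]
      exact neg_mem (Ideal.sum_mem _ fun i _ =>
        Ideal.mul_mem_left _ _ (Ideal.subset_span ⟨i, rfl⟩))
    have hlastJ : a (Fin.last c) ∈ J := by
      have h0 : rl • (Submodule.Quotient.mk (a (Fin.last c)) :
          R ⧸ (Ideal.ofList (List.ofFn rc) • ⊤ : Submodule R R)) = rl • (0 : _) := by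
        rw [smul_zero, ← Submodule.Quotient.mk_smul, Submodule.Quotient.mk_eq_zero]
        rw [idealSmulTop, hJof, smul_eq_mul, mul_comm]
        exact hmem
      have h1 := hreg2 h0
      rwa [Submodule.Quotient.mk_eq_zero, idealSmulTop, hJof] at h1
    obtain ⟨b, hb⟩ := Ideal.mem_span_range_iff_exists_fun.mp hlastJ
    have hrel' : ∑ i : Fin c, (a i.castSucc + b i * rl) * rc i = 0 := by
      have e1 : ∑ i : Fin c, (a i.castSucc + b i * rl) * rc i
          = (∑ i : Fin c, a i.castSucc * rc i) + (∑ i : Fin c, b i * rc i) * rl := by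
        rw [Finset.sum_mul, ← Finset.sum_add_distrib]
        exact Finset.sum_congr rfl fun i _ => by ring
      rw [e1, hb]
      exact hrel
    have hind := ih rc hreg1 _ hrel'
    intro i
    refine Fin.lastCases ?_ ?_ i
    · exact Ideal.span_mono hsub hlastJ
    · intro i
      have h1 : a i.castSucc + b i * rl ∈ Ideal.span (Set.range r) :=
        Ideal.span_mono hsub (hind i)
      have h2 : b i * rl ∈ Ideal.span (Set.range r) :=
        Ideal.mul_mem_left _ _ (Ideal.subset_span ⟨Fin.last c, rfl⟩)
      simpa using sub_mem h1 h2

section Aux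

variable {k : Type*} [Field k] {n : ℕ}

/-- A polynomial with zero constant coefficient lies in the ideal generated by the
variables. -/
lemma memSpanX {p : MvPolynomial (Fin n) k} (h : constantCoeff p = 0) :
    p ∈ Ideal.span (Set.range (X : Fin n → MvPolynomial (Fin n) k)) := by
  have key : ∀ q : MvPolynomial (Fin n) k,
      q - C (constantCoeff q) ∈ Ideal.span (Set.range (X : Fin n → MvPolynomial (Fin n) k)) := by
    intro q
    induction q using MvPolynomial.induction_on with
    | C a => simp
    | add p q hp hq =>
      have : p + q - C (constantCoeff (p + q))
          = (p - C (constantCoeff p)) + (q - C (constantCoeff q)) := by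
        rw [map_add, map_add]; ring
      rw [this]; exact add_mem hp hq
    | mul_X p i hp =>
      have : p * X i - C (constantCoeff (p * X i)) = p * X i := by
        rw [map_mul, constantCoeff_X, mul_zero, map_zero, sub_zero]
      rw [this]
      exact Ideal.mul_mem_left _ _ (Ideal.subset_span ⟨i, rfl⟩)
  have := key p
  rwa [h, map_zero, sub_zero] at this

/-- A polynomial antisymmetric under a transposition is divisible by the
corresponding difference of variables. -/
lemma dvdOfAntisymm [CharZero k] (u v : Fin n) (huv : u ≠ v) (p : MvPolynomial (Fin n) k)
    (hp : rename (⇑(Equiv.swap u v)) p = -p) :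
    ∃ s, p = (X u - X v) * s := by
  set J : Ideal (MvPolynomial (Fin n) k) := Ideal.span {X u - X v} with hJ
  set ψ : MvPolynomial (Fin n) k →ₐ[k] MvPolynomial (Fin n) k :=
    aeval (fun i => if i = u then X v else X i) with hψ
  have h1 : (Ideal.Quotient.mkₐ k J).comp ψ = Ideal.Quotient.mkₐ k J := by
    apply MvPolynomial.algHom_ext
    intro i
    simp only [AlgHom.comp_apply, hψ, aeval_X]
    by_cases hi : i = u
    · rw [hi, if_pos rfl]
      show Ideal.Quotient.mk J (X v) = Ideal.Quotient.mk J (X u)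
      rw [Ideal.Quotient.eq]
      have : X u - X v ∈ J := Ideal.subset_span (Set.mem_singleton _)
      simpa using neg_mem this
    · rw [if_neg hi]
  have h2 : ψ.comp (rename (⇑(Equiv.swap u v))) = ψ := by
    apply MvPolynomial.algHom_ext
    intro i
    simp only [AlgHom.comp_apply, rename_X, hψ, aeval_X]
    by_cases hi : i = u
    · rw [hi, Equiv.swap_apply_left, if_neg (Ne.symm huv), if_pos rfl]
    · by_cases hi' : i = v
      · rw [hi', Equiv.swap_apply_right, if_pos rfl, if_neg (Ne.symm huv)]
      · rw [Equiv.swap_apply_of_ne_of_ne hi hi']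
  have e1 : ψ (rename (⇑(Equiv.swap u v)) p) = ψ p := by
    rw [← AlgHom.comp_apply, h2]
  rw [hp, map_neg] at e1
  have e2 : (2 : MvPolynomial (Fin n) k) * ψ p = 0 := by linear_combination -e1
  have h2ne : (2 : MvPolynomial (Fin n) k) ≠ 0 := two_ne_zero
  have hψ0 : ψ p = 0 := by
    rcases mul_eq_zero.mp e2 with h | h
    · exact absurd h h2ne
    · exact h
  have e3 : (Ideal.Quotient.mkₐ k J) p = 0 := by
    rw [← h1, AlgHom.comp_apply, hψ0, map_zero]
  rw [Ideal.Quotient.mkₐ_eq_mk, Ideal.Quotient.eq_zero_iff_mem, hJ,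
    Ideal.mem_span_singleton] at e3
  obtain ⟨s, hs⟩ := e3
  exact ⟨s, hs⟩

/-- If some permutation moves an element of a stable subspace, then some transposition
does. -/
lemma existsSwapMove (W : Submodule k (MvPolynomial (Fin n) k)) (hst : Stable W)
    (hnt : ∃ σ : Equiv.Perm (Fin n), ∃ p ∈ W, rename (⇑σ) p ≠ p) :
    ∃ u v : Fin n, u ≠ v ∧ ∃ p ∈ W, rename (⇑(Equiv.swap u v)) p ≠ p := by
  by_contra hc
  push_neg at hc
  obtain ⟨σ, p, hpW, hp⟩ := hnt
  apply hp
  have key : ∀ σ : Equiv.Perm (Fin n), ∀ p ∈ W, rename (⇑σ) p = p := by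
    intro σ
    refine Equiv.Perm.swap_induction_on σ ?_ ?_
    · intro p _; simp
    · intro f x y hxy ihf
      intro p hpW
      have : (⇑(Equiv.swap x y * f) : Fin n → Fin n) = ⇑(Equiv.swap x y) ∘ ⇑f :=
        Equiv.Perm.coe_mul _ _
      rw [this, ← rename_rename, ihf p hpW]
      exact hc x y hxy p hpW
  exact key σ p hpW

/-- Transfer a moving transposition to any prescribed transposition, using stability. -/
lemma swapMoveTransfer (W : Submodule k (MvPolynomial (Fin n) k)) (hst : Stable W)
    (u v u' v' : Fin n) (huv : u ≠ v) (hu'v' : u' ≠ v')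
    (h : ∃ p ∈ W, rename (⇑(Equiv.swap u' v')) p ≠ p) :
    ∃ p ∈ W, rename (⇑(Equiv.swap u v)) p ≠ p := by
  obtain ⟨p, hpW, hp⟩ := h
  set ρ₁ : Equiv.Perm (Fin n) := Equiv.swap u' u with hρ₁
  set j : Fin n := ρ₁ v' with hj
  have hju : j ≠ u := by
    intro hju
    apply hu'v'
    have : ρ₁ v' = ρ₁ u' := by rw [← hj, hju, hρ₁, Equiv.swap_apply_left]
    exact (ρ₁.injective this).symm
  set ρ₂ : Equiv.Perm (Fin n) := Equiv.swap j v with hρ₂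
  set ρ : Equiv.Perm (Fin n) := ρ₂ * ρ₁ with hρ
  have hρu : ρ u' = u := by
    show ρ₂ (ρ₁ u') = u
    rw [hρ₁, Equiv.swap_apply_left, hρ₂]
    exact Equiv.swap_apply_of_ne_of_ne (Ne.symm hju) huv
  have hρv : ρ v' = v := by
    show ρ₂ (ρ₁ v') = v
    rw [← hj, hρ₂, Equiv.swap_apply_left]
  have hconj : Equiv.swap u v = ρ * Equiv.swap u' v' * ρ⁻¹ := by
    rw [← hρu, ← hρv]
    exact Equiv.swap_apply_apply ρ u' v'
  have hmul : Equiv.swap u v * ρ = ρ * Equiv.swap u' v' := by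
    rw [hconj]; group
  refine ⟨rename (⇑ρ) p, hst ρ p hpW, ?_⟩
  intro heq
  apply hp
  have e1 : rename (⇑ρ) (rename (⇑(Equiv.swap u' v')) p) = rename (⇑ρ) p := by
    rw [rename_rename, ← Equiv.Perm.coe_mul, ← hmul, Equiv.Perm.coe_mul, ← rename_rename]
    exact heq
  exact rename_injective _ ρ.injective e1

/-- Linear algebra: vanishing 2×2 minors give a nontrivial dependence. -/
lemma existsDep {K : Type*} [Field K] {c : ℕ} (α β : Fin c → K)
    (h : ∀ i j, α i * β j - α j * β i = 0) :
    ∃ μ ν : K, (μ ≠ 0 ∨ ν ≠ 0) ∧ ∀ i, μ * α i + ν * β i = 0 := by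
  by_cases hα : ∀ i, α i = 0
  · exact ⟨1, 0, Or.inl one_ne_zero, fun i => by simp [hα i]⟩
  · push_neg at hα
    obtain ⟨q, hq⟩ := hα
    exact ⟨β q, -α q, Or.inr (neg_ne_zero.mpr hq), fun i => by linear_combination h i q⟩

end Aux

/-- Let `I ⊆ R = k[x_1,…,x_n]` be an `S_n`-stable homogeneous
ideal, `m = (x_1,…,x_n)`, and let `V ⊆ I` be a graded `S_n`-stable subspace
mapping isomorphically onto `I/mI` (an equivariant lift), i.e. `V ⊕ mI = I` as
`k`-vector spaces.  If `V` contains a direct sum of at least two (possibly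
isomorphic) nontrivial irreducible `S_n`-subrepresentations, then `I` is not a
complete intersection. -/
theorem stmt5 {k : Type*} [Field k] [CharZero k] {n : ℕ}
    (I : Ideal (MvPolynomial (Fin n) k))
    -- `I` is `S_n`-stable and homogeneous:
    (hIstab : ∀ σ : Equiv.Perm (Fin n), ∀ p ∈ I, rename (⇑σ) p ∈ I)
    (hIhom : ∀ p ∈ I, ∀ d, homogeneousComponent d p ∈ I)
    (V : Submodule k (MvPolynomial (Fin n) k))
    (hVI : V ≤ I.restrictScalars k)
    (hVstab : Stable V)
    -- `V` is graded:
    (hVgr : ∀ p ∈ V, ∀ d, homogeneousComponent d p ∈ V)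
    -- `V` is an equivariant lift of `I/mI`, i.e. `V ⊕ mI = I`:
    (hdisj : Disjoint V ((Ideal.span (Set.range (X : Fin n → MvPolynomial (Fin n) k)) * I).restrictScalars k))
    (hsup : V ⊔ (Ideal.span (Set.range (X : Fin n → MvPolynomial (Fin n) k)) * I).restrictScalars k
      = I.restrictScalars k)
    -- `V` contains a direct sum of two nontrivial irreducible subrepresentations:
    (W₁ W₂ : Submodule k (MvPolynomial (Fin n) k))
    (hW₁V : W₁ ≤ V) (hW₂V : W₂ ≤ V)
    (hW₁ : W₁ ≠ ⊥) (hW₂ : W₂ ≠ ⊥)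
    (hdisjW : Disjoint W₁ W₂)
    (hW₁stab : Stable W₁) (hW₂stab : Stable W₂)
    (hW₁irr : ∀ U ≤ W₁, Stable U → U = ⊥ ∨ U = W₁)
    (hW₂irr : ∀ U ≤ W₂, Stable U → U = ⊥ ∨ U = W₂)
    (hW₁nontriv : ∃ σ : Equiv.Perm (Fin n), ∃ p ∈ W₁, rename (⇑σ) p ≠ p)
    (hW₂nontriv : ∃ σ : Equiv.Perm (Fin n), ∃ p ∈ W₂, rename (⇑σ) p ≠ p) :
    ¬ IsCompleteIntersection I := by
  intro hCI
  obtain ⟨rs, hreg, hspan⟩ := hCI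
  classical
  -- Find a single transposition moving elements of both W₁ and W₂
  obtain ⟨u, v, huv, hmove₁⟩ := existsSwapMove W₁ hW₁stab hW₁nontriv
  obtain ⟨u', v', hu'v', hmove₂'⟩ := existsSwapMove W₂ hW₂stab hW₂nontriv
  obtain ⟨g, hgW, hg⟩ := swapMoveTransfer W₂ hW₂stab u v u' v' huv hu'v' hmove₂'
  obtain ⟨f, hfW, hf⟩ := hmove₁
  have hττ : ∀ p : MvPolynomial (Fin n) k,
      rename (⇑(Equiv.swap u v)) (rename (⇑(Equiv.swap u v)) p) = p := by
    intro p
    rw [rename_rename]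
    have hid : (⇑(Equiv.swap u v) ∘ ⇑(Equiv.swap u v) : Fin n → Fin n) = id := by
      funext x; simp [Equiv.swap_apply_self]
    rw [hid, rename_id, AlgHom.id_apply]
  -- Antisymmetric elements
  have hh₁W : f - rename (⇑(Equiv.swap u v)) f ∈ W₁ :=
    sub_mem hfW (hW₁stab (Equiv.swap u v) f hfW)
  have hh₂W : g - rename (⇑(Equiv.swap u v)) g ∈ W₂ :=
    sub_mem hgW (hW₂stab (Equiv.swap u v) g hgW)
  set h₁ := f - rename (⇑(Equiv.swap u v)) f with hh₁
  set h₂ := g - rename (⇑(Equiv.swap u v)) g with hh₂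
  have hh₁0 : h₁ ≠ 0 := sub_ne_zero_of_ne (Ne.symm hf)
  have hh₂0 : h₂ ≠ 0 := sub_ne_zero_of_ne (Ne.symm hg)
  have hanti₁ : rename (⇑(Equiv.swap u v)) h₁ = -h₁ := by
    rw [hh₁, map_sub, hττ]; ring
  have hanti₂ : rename (⇑(Equiv.swap u v)) h₂ = -h₂ := by
    rw [hh₂, map_sub, hττ]; ring
  obtain ⟨s₁, hs₁⟩ := dvdOfAntisymm u v huv h₁ hanti₁
  obtain ⟨s₂, hs₂⟩ := dvdOfAntisymm u v huv h₂ hanti₂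
  -- The regular sequence as an indexed family
  set rv : Fin rs.length → MvPolynomial (Fin n) k := rs.get with hrv
  have hofn : List.ofFn rv = rs := List.ofFn_get rs
  have hrange : Ideal.span (Set.range rv) = I := by
    rw [← hspan]
    congr 1
    ext x
    simp only [Set.mem_range, Set.mem_setOf_eq]
    constructor
    · rintro ⟨i, rfl⟩; exact List.get_mem rs i
    · intro hx; exact List.mem_iff_get.mp hx
  have hwreg : RingTheory.Sequence.IsWeaklyRegular (MvPolynomial (Fin n) k) (List.ofFn rv) := by
    rw [hofn]; exact hreg.toIsWeaklyRegular
  have hIne : I ≠ ⊤ := by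
    intro htop
    apply hreg.top_ne_smul
    have h1 : Ideal.ofList rs = I := hspan
    rw [h1, idealSmulTop, htop]
  have hconstI : ∀ p ∈ I, constantCoeff p = 0 := by
    intro p hp
    by_contra hc0
    have h0 : homogeneousComponent 0 p ∈ I := hIhom p hp 0
    rw [homogeneousComponent_zero] at h0
    have hcc : coeff 0 p = constantCoeff p := rfl
    rw [hcc] at h0
    have hunit : (1 : MvPolynomial (Fin n) k) ∈ I := by
      have h2 := I.mul_mem_left (C (constantCoeff p)⁻¹) h0
      rwa [← C_mul, inv_mul_cancel₀ hc0, C_1] at h2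
    exact hIne ((Ideal.eq_top_iff_one I).mpr hunit)
  -- coefficients
  have hh₁I : h₁ ∈ Ideal.span (Set.range rv) := by
    rw [hrange]; exact hVI (hW₁V hh₁W)
  have hh₂I : h₂ ∈ Ideal.span (Set.range rv) := by
    rw [hrange]; exact hVI (hW₂V hh₂W)
  obtain ⟨a, ha⟩ := Ideal.mem_span_range_iff_exists_fun.mp hh₁I
  obtain ⟨b, hb⟩ := Ideal.mem_span_range_iff_exists_fun.mp hh₂I
  -- First syzygy
  have hrel1 : ∑ i, (s₂ * a i - s₁ * b i) * rv i = 0 := by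
    have e1 : ∑ i, (s₂ * a i - s₁ * b i) * rv i
        = s₂ * (∑ i, a i * rv i) - s₁ * (∑ i, b i * rv i) := by
      rw [Finset.mul_sum, Finset.mul_sum, ← Finset.sum_sub_distrib]
      exact Finset.sum_congr rfl fun i _ => by ring
    rw [e1, ha, hb, hs₁, hs₂]; ring
  have hcc1 : ∀ i, (s₂ * a i - s₁ * b i) ∈ Ideal.span (Set.range rv) :=
    factK rs.length rv hwreg _ hrel1
  choose d hd using fun i => Ideal.mem_span_range_iff_exists_fun.mp (hcc1 i)
  -- Second syzygy, one for each i
  have hrel2 : ∀ i, ∑ j, (a i * b j - a j * b i - (X u - X v) * d i j) * rv j = 0 := by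
    intro i
    have e1 : ∑ j, (a i * b j - a j * b i - (X u - X v) * d i j) * rv j
        = a i * (∑ j, b j * rv j) - b i * (∑ j, a j * rv j)
          - (X u - X v) * (∑ j, d i j * rv j) := by
      rw [Finset.mul_sum, Finset.mul_sum, Finset.mul_sum, ← Finset.sum_sub_distrib,
        ← Finset.sum_sub_distrib]
      exact Finset.sum_congr rfl fun j _ => by ring
    rw [e1, ha, hb, hd i, hs₁, hs₂]; ring
  have hee : ∀ i j, (a i * b j - a j * b i - (X u - X v) * d i j) ∈ I := by
    intro i j
    have h0 := factK rs.length rv hwreg _ (hrel2 i) j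
    rwa [hrange] at h0
  -- constant coefficients are proportional
  have hmin : ∀ i j, constantCoeff (a i) * constantCoeff (b j)
      - constantCoeff (a j) * constantCoeff (b i) = 0 := by
    intro i j
    have h0 := hconstI _ (hee i j)
    have hδ0 : constantCoeff (X u - X v : MvPolynomial (Fin n) k) = 0 := by
      rw [map_sub, constantCoeff_X, constantCoeff_X, sub_zero]
    rw [map_sub, map_sub, map_mul, map_mul, map_mul, hδ0, zero_mul, sub_zero] at h0
    exact h0
  obtain ⟨μ, ν, hμν, hlin⟩ := existsDep (fun i => constantCoeff (a i))
    (fun i => constantCoeff (b i)) hmin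
  -- the contradiction element
  set e := μ • h₁ + ν • h₂ with he
  have heV : e ∈ V :=
    add_mem (Submodule.smul_mem V μ (hW₁V hh₁W)) (Submodule.smul_mem V ν (hW₂V hh₂W))
  have hene : e ≠ 0 := by
    intro h0
    rw [he, add_eq_zero_iff_eq_neg] at h0
    have hmem1 : μ • h₁ ∈ W₁ := Submodule.smul_mem _ _ hh₁W
    have hmem2 : μ • h₁ ∈ W₂ := by
      rw [h0]; exact neg_mem (Submodule.smul_mem _ _ hh₂W)
    have h2 : μ • h₁ = 0 := Submodule.disjoint_def.mp hdisjW _ hmem1 hmem2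
    have h3 : ν • h₂ = 0 := by
      have h5 := h0; rw [h2] at h5
      have h6 : -(ν • h₂) = 0 := h5.symm
      simpa using h6
    rcases smul_eq_zero.mp h2 with hμ | hbad
    · rcases smul_eq_zero.mp h3 with hν | hbad
      · rcases hμν with h | h
        · exact h hμ
        · exact h hν
      · exact hh₂0 hbad
    · exact hh₁0 hbad
  have heM : e ∈ Ideal.span (Set.range (X : Fin n → MvPolynomial (Fin n) k)) * I := by
    have he2 : e = ∑ i, (C μ * a i + C ν * b i) * rv i := by
      have e1 : ∑ i, (C μ * a i + C ν * b i) * rv i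
          = C μ * (∑ i, a i * rv i) + C ν * (∑ i, b i * rv i) := by
        rw [Finset.mul_sum, Finset.mul_sum, ← Finset.sum_add_distrib]
        exact Finset.sum_congr rfl fun i _ => by ring
      rw [he, e1, ha, hb, Algebra.smul_def, Algebra.smul_def, algebraMap_eq]
    rw [he2]
    apply Ideal.sum_mem
    intro i _
    apply Ideal.mul_mem_mul
    · apply memSpanX
      rw [map_add, map_mul, map_mul, constantCoeff_C, constantCoeff_C]
      exact hlin i
    · rw [← hrange]; exact Ideal.subset_span ⟨i, rfl⟩
  have hfinal : e = 0 := Submodule.disjoint_def.mp hdisj e heV heM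
  exact hene hfinal


end
end

section
/- In R = k[x_1,x_2,x_3,x_4] over a field k of characteristic zero, setting g_1 = (x_1-x_2)(x_3-x_4), g_2 = (x_1-x_3)(x_2-x_4), the sequence g_1, g_2, e_2, e_1^3 is a regular sequence, and the k-span of {g_1, g_2} is an S_4-stable subspace of R isomorphic to the irreducible representation S^{(2,2)}. -/
set_option linter.unusedSectionVars false
set_option maxHeartbeats 1000000

open MvPolynomial

noncomputable section

section RegHelpers
open Polynomial

variable {B : Type*} [CommRing B]

lemma mem_mapC_iff' {I : Ideal B} {p : B[X]} :
    p ∈ I.map (Polynomial.C : B →+* B[X]) ↔ p.map (Ideal.Quotient.mk I) = 0 := by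
  rw [Ideal.mem_map_C_iff]
  constructor
  · intro h
    ext n
    simp only [Polynomial.coeff_map, Polynomial.coeff_zero]
    exact Ideal.Quotient.eq_zero_iff_mem.2 (h n)
  · intro h n
    have := congrArg (fun q => Polynomial.coeff q n) h
    simp only [Polynomial.coeff_map, Polynomial.coeff_zero] at this
    exact Ideal.Quotient.eq_zero_iff_mem.1 this

/-- Lemma C : a `C b` with `b` regular is regular mod a monic polynomial. -/
lemma lemC {b : B} (hb : ∀ x : B, b * x = 0 → x = 0)
    {m : B[X]} (hm : m.Monic) :
    ∀ u : B[X], Polynomial.C b * u ∈ Ideal.span {m} → u ∈ Ideal.span {m} := by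
  rcases subsingleton_or_nontrivial B with hB | hB
  · intro u _
    have : u = 0 := Subsingleton.elim _ _
    simp [this]
  intro u hu
  rw [Ideal.mem_span_singleton] at hu ⊢
  have hrw : u %ₘ m = u - m * (u /ₘ m) := by
    rw [eq_sub_iff_add_eq, Polynomial.modByMonic_add_div u m]
  have h1 : m ∣ Polynomial.C b * (u %ₘ m) := by
    rw [hrw, mul_sub]
    exact dvd_sub hu ⟨Polynomial.C b * (u /ₘ m), by ring⟩
  have hdeg : (Polynomial.C b * (u %ₘ m)).degree < m.degree := by
    calc (Polynomial.C b * (u %ₘ m)).degree ≤ (Polynomial.C b).degree + (u %ₘ m).degree :=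
          Polynomial.degree_mul_le _ _
      _ ≤ 0 + (u %ₘ m).degree := add_le_add Polynomial.degree_C_le le_rfl
      _ = (u %ₘ m).degree := zero_add _
      _ < m.degree := Polynomial.degree_modByMonic_lt u hm
  have h0 : Polynomial.C b * (u %ₘ m) = 0 := by
    have hz := (Polynomial.modByMonic_eq_zero_iff_dvd hm).2 h1
    rwa [(Polynomial.modByMonic_eq_self_iff hm).2 hdeg] at hz
  have hr : u %ₘ m = 0 := by
    ext n
    have := congrArg (fun q => Polynomial.coeff q n) h0
    simp only [Polynomial.coeff_C_mul, Polynomial.coeff_zero] at this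
    simpa using hb _ this
  refine ⟨u /ₘ m, ?_⟩
  have := Polynomial.modByMonic_add_div u m
  rw [hr, zero_add] at this
  exact this.symm

/-- T0 : a monic polynomial is regular mod `I.map C`. -/
lemma lemT0 (I : Ideal B) {m : B[X]} (hm : m.Monic) :
    ∀ u : B[X], m * u ∈ I.map (Polynomial.C : B →+* B[X]) →
      u ∈ I.map (Polynomial.C : B →+* B[X]) := by
  intro u hu
  rw [mem_mapC_iff'] at hu ⊢
  rw [Polynomial.map_mul] at hu
  exact (hm.map _).mul_right_eq_zero_iff.1 hu

/-- T1 : `C b` is regular mod `I.map C` if `b` is regular mod `I`. -/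
lemma lemT1 (I : Ideal B) {b : B} (hb : ∀ v : B, b * v ∈ I → v ∈ I) :
    ∀ u : B[X], Polynomial.C b * u ∈ I.map (Polynomial.C : B →+* B[X]) →
      u ∈ I.map (Polynomial.C : B →+* B[X]) := by
  intro u hu
  rw [Ideal.mem_map_C_iff] at hu ⊢
  intro n
  have := hu n
  rw [Polynomial.coeff_C_mul] at this
  exact hb _ this

/-- T2 : `C b` regular mod `I.map C ⊔ (m)` for `m` monic, `b` regular mod `I`. -/
lemma lemT2 (I : Ideal B) {b : B} (hb : ∀ v : B, b * v ∈ I → v ∈ I)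
    {m : B[X]} (hm : m.Monic) :
    ∀ u : B[X], Polynomial.C b * u ∈ I.map (Polynomial.C : B →+* B[X]) ⊔ Ideal.span {m} →
      u ∈ I.map (Polynomial.C : B →+* B[X]) ⊔ Ideal.span {m} := by
  intro u hu
  rw [Submodule.mem_sup] at hu
  obtain ⟨y, hy, z, hz, hyz⟩ := hu
  rw [Ideal.mem_span_singleton] at hz
  obtain ⟨w, rfl⟩ := hz
  set π := Ideal.Quotient.mk I with hπ
  have hb' : ∀ x : B ⧸ I, π b * x = 0 → x = 0 := by
    intro x hx
    obtain ⟨v, rfl⟩ := Ideal.Quotient.mk_surjective x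
    rw [← map_mul, Ideal.Quotient.eq_zero_iff_mem] at hx
    exact Ideal.Quotient.eq_zero_iff_mem.2 (hb v hx)
  have key : Polynomial.C (π b) * (u.map π) ∈ Ideal.span {m.map π} := by
    rw [Ideal.mem_span_singleton]
    refine ⟨w.map π, ?_⟩
    have h2 : (Polynomial.C b * u).map π = (m * w).map π := by
      rw [← hyz, Polynomial.map_add, mem_mapC_iff'.1 hy, zero_add]
    simpa [Polynomial.map_mul] using h2
  have := lemC hb' (hm.map π) _ key
  rw [Ideal.mem_span_singleton] at this
  obtain ⟨t', ht'⟩ := this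
  obtain ⟨t, rfl⟩ := Polynomial.map_surjective π Ideal.Quotient.mk_surjective t'
  have hker : u - m * t ∈ I.map (Polynomial.C : B →+* B[X]) := by
    rw [mem_mapC_iff', Polynomial.map_sub, Polynomial.map_mul, ← ht', sub_self]
  have : u = (u - m * t) + m * t := by ring
  rw [this]
  exact Submodule.add_mem_sup hker (Ideal.mem_span_singleton.2 ⟨t, rfl⟩)

/-- transfer a regularity condition along a ring isomorphism -/
lemma cond_transfer {R S : Type*} [CommRing R] [CommRing S] (e : R ≃+* S)
    {a : R} {I : Ideal R} {a' : S} {I' : Ideal S}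
    (ha : e a = a') (hI : I.map e = I')
    (h : ∀ y : S, a' * y ∈ I' → y ∈ I') :
    ∀ x : R, a * x ∈ I → x ∈ I := by
  intro x hx
  have h1 : a' * e x ∈ I' := by
    rw [← ha, ← map_mul, ← hI]
    exact Ideal.mem_map_of_mem _ hx
  have h2 := h (e x) h1
  rw [← hI] at h2
  rwa [Ideal.apply_mem_of_equiv_iff] at h2

/-- strip a unit factor from the multiplier -/
lemma unit_mul_cond {R : Type*} [CommRing R] {c f : R} (hc : IsUnit c) (I : Ideal R)
    (h : ∀ x, f * x ∈ I → x ∈ I) : ∀ x, (c * f) * x ∈ I → x ∈ I := by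
  intro x hx
  refine h x ?_
  obtain ⟨u, rfl⟩ := hc
  have : f * x = (↑u⁻¹ : R) * (↑u * f * x) := by
    rw [← mul_assoc, ← mul_assoc, Units.inv_mul, one_mul]
  rw [this]
  exact I.mul_mem_left _ hx

lemma smulreg_of_cond {R : Type*} [CommRing R] (N : Submodule R R) (r : R)
    (h : ∀ x, r * x ∈ N → x ∈ N) : IsSMulRegular (R ⧸ N) r := by
  intro a b hab
  obtain ⟨x, rfl⟩ := Submodule.Quotient.mk_surjective N a
  obtain ⟨y, rfl⟩ := Submodule.Quotient.mk_surjective N b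
  simp only [← Submodule.Quotient.mk_smul] at hab
  rw [Submodule.Quotient.eq] at hab
  have : r * (x - y) ∈ N := by
    simpa [smul_eq_mul, mul_sub] using hab
  exact (Submodule.Quotient.eq N).2 (by simpa [smul_eq_mul, mul_sub] using h _ this)


end RegHelpers

section Dev
variable (k : Type*) [Field k] [CharZero k]
local notation "R4" => MvPolynomial (Fin 4) k
local notation "g1e" => ((X 0 - X 1) * (X 2 - X 3) : R4)
local notation "g2e" => ((X 0 - X 2) * (X 1 - X 3) : R4)
local notation "We" => Submodule.span k {((X 0 - X 1) * (X 2 - X 3) : R4), ((X 0 - X 2) * (X 1 - X 3) : R4)}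

def Pmap : R4 →ₐ[k] R4 :=
  aeval ![X 0 + X 1 + X 2 + X 3, X 0 + X 1 - X 2 - X 3,
          X 0 - X 1 + X 2 - X 3, X 0 - X 1 - X 2 + X 3]

def Qmap : R4 →ₐ[k] R4 :=
  aeval ![C (4⁻¹ : k) * (X 0 + X 1 + X 2 + X 3), C (4⁻¹ : k) * (X 0 + X 1 - X 2 - X 3),
          C (4⁻¹ : k) * (X 0 - X 1 + X 2 - X 3), C (4⁻¹ : k) * (X 0 - X 1 - X 2 + X 3)]

lemma hC4 : (C (4⁻¹ : k) : R4) * 4 = 1 := by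
  rw [show ((4 : R4)) = C (4 : k) from (map_ofNat (C : k →+* R4) 4).symm, ← C_mul]
  norm_num

def zEquiv : R4 ≃ₐ[k] R4 := by
  refine AlgEquiv.ofAlgHom (Pmap k) (Qmap k) ?_ ?_
  · apply MvPolynomial.algHom_ext
    intro i
    have h4 := hC4 k
    fin_cases i <;>
      simp [Pmap, Qmap, map_add, map_sub, map_mul, aeval_X] <;>
      (first
        | linear_combination (X (0:Fin 4) : R4) * h4
        | linear_combination (X (1:Fin 4) : R4) * h4
        | linear_combination (X (2:Fin 4) : R4) * h4
        | linear_combination (X (3:Fin 4) : R4) * h4)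
  · apply MvPolynomial.algHom_ext
    intro i
    have h4 := hC4 k
    fin_cases i <;>
      simp [Pmap, Qmap, map_add, map_sub, map_mul, aeval_X] <;>
      (first
        | linear_combination (X (0:Fin 4) : R4) * h4
        | linear_combination (X (1:Fin 4) : R4) * h4
        | linear_combination (X (2:Fin 4) : R4) * h4
        | linear_combination (X (3:Fin 4) : R4) * h4)


lemma zEquiv_apply (p : MvPolynomial (Fin 4) k) : (zEquiv k).toRingEquiv p = Pmap k p := rfl

lemma hesymm1 : esymm (Fin 4) k 1 = X 0 + X 1 + X 2 + X 3 := by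
  rw [esymm_one, Fin.sum_univ_four]

lemma hesymm2 : esymm (Fin 4) k 2 =
    X 0 * X 1 + X 0 * X 2 + X 0 * X 3 + X 1 * X 2 + X 1 * X 3 + X 2 * X 3 := by
  rw [esymm]
  rw [show (Finset.powersetCard 2 (Finset.univ : Finset (Fin 4)))
      = {{0,1},{0,2},{0,3},{1,2},{1,3},{2,3}} from by decide]
  rw [Finset.sum_insert (by decide), Finset.sum_insert (by decide),
    Finset.sum_insert (by decide), Finset.sum_insert (by decide),
    Finset.sum_insert (by decide), Finset.sum_singleton,
    Finset.prod_insert (by decide), Finset.prod_singleton,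
    Finset.prod_insert (by decide), Finset.prod_singleton,
    Finset.prod_insert (by decide), Finset.prod_singleton,
    Finset.prod_insert (by decide), Finset.prod_singleton,
    Finset.prod_insert (by decide), Finset.prod_singleton,
    Finset.prod_insert (by decide), Finset.prod_singleton]
  ring

lemma hEg1 : (zEquiv k).toRingEquiv ((X 0 - X 1) * (X 2 - X 3) : R4)
    = 4 * ((X 2)^2 - (X 3)^2) := by
  rw [zEquiv_apply]
  simp only [Pmap, map_mul, map_sub, aeval_X]
  simp
  ring

lemma hEg2 : (zEquiv k).toRingEquiv ((X 0 - X 2) * (X 1 - X 3) : R4)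
    = 4 * ((X 1)^2 - (X 3)^2) := by
  rw [zEquiv_apply]
  simp only [Pmap, map_mul, map_sub, aeval_X]
  simp
  ring

lemma hEe2 : (zEquiv k).toRingEquiv (esymm (Fin 4) k 2)
    = 2 * (3 * (X 0)^2 - (X 1)^2 - (X 2)^2 - (X 3)^2) := by
  rw [zEquiv_apply, hesymm2]
  simp only [Pmap, map_mul, map_add, map_sub, aeval_X]
  simp
  ring

lemma hEe13 : (zEquiv k).toRingEquiv ((esymm (Fin 4) k 1)^3)
    = 64 * (X 0)^3 := by
  rw [zEquiv_apply, hesymm1]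
  simp only [Pmap, map_pow, map_add, aeval_X]
  simp
  ring


lemma claimN2 : ∀ w : MvPolynomial (Fin 2) k,
    (X 1)^4 * w ∈ Ideal.span {(X 0)^2 - (X 1)^2} →
    w ∈ Ideal.span {(X 0 : MvPolynomial (Fin 2) k)^2 - (X 1)^2} := by
  have h1 : (X 1 : MvPolynomial (Fin 2) k) = X ((0 : Fin 1).succ) := rfl
  have hEa : (finSuccEquiv k 1).toRingEquiv ((X 1 : MvPolynomial (Fin 2) k)^4)
      = Polynomial.C ((X 0 : MvPolynomial (Fin 1) k)^4) := by
    show (finSuccEquiv k 1) ((X 1 : MvPolynomial (Fin 2) k)^4) = _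
    rw [map_pow, h1, finSuccEquiv_X_succ, ← Polynomial.C_pow]
  have hEm : (finSuccEquiv k 1).toRingEquiv ((X 0 : MvPolynomial (Fin 2) k)^2 - (X 1)^2)
      = Polynomial.X^2 - Polynomial.C ((X 0 : MvPolynomial (Fin 1) k)^2) := by
    show (finSuccEquiv k 1) _ = _
    rw [map_sub, map_pow, map_pow, h1, finSuccEquiv_X_succ, finSuccEquiv_X_zero,
      ← Polynomial.C_pow]
  refine cond_transfer (finSuccEquiv k 1).toRingEquiv
    (I' := Ideal.span {Polynomial.X^2 - Polynomial.C ((X 0 : MvPolynomial (Fin 1) k)^2)}) hEa ?_ ?_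
  · rw [Ideal.map_span, Set.image_singleton, hEm]
  · refine lemC ?_ (Polynomial.monic_X_pow_sub_C _ (by norm_num))
    intro x hx
    exact (mul_eq_zero.1 hx).resolve_left (pow_ne_zero _ (MvPolynomial.X_ne_zero _))

lemma claimN1' : ∀ v : MvPolynomial (Fin 3) k,
    ((X 0)^2 - (X 2)^2) * v ∈ Ideal.span {(X 1)^2 - (X 2)^2} →
    v ∈ Ideal.span {(X 1 : MvPolynomial (Fin 3) k)^2 - (X 2)^2} := by
  have h1 : (X 1 : MvPolynomial (Fin 3) k) = X ((0 : Fin 2).succ) := rfl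
  have h2 : (X 2 : MvPolynomial (Fin 3) k) = X ((1 : Fin 2).succ) := rfl
  have hEa : (finSuccEquiv k 2).toRingEquiv ((X 0 : MvPolynomial (Fin 3) k)^2 - (X 2)^2)
      = Polynomial.X^2 - Polynomial.C ((X 1 : MvPolynomial (Fin 2) k)^2) := by
    show (finSuccEquiv k 2) _ = _
    rw [map_sub, map_pow, map_pow, h2, finSuccEquiv_X_succ, finSuccEquiv_X_zero,
      ← Polynomial.C_pow]
  have hEb : (finSuccEquiv k 2).toRingEquiv ((X 1 : MvPolynomial (Fin 3) k)^2 - (X 2)^2)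
      = Polynomial.C ((X 0 : MvPolynomial (Fin 2) k)^2 - (X 1)^2) := by
    show (finSuccEquiv k 2) _ = _
    rw [map_sub, map_pow, map_pow, h1, h2, finSuccEquiv_X_succ, finSuccEquiv_X_succ,
      ← Polynomial.C_pow, ← Polynomial.C_pow, ← Polynomial.C_sub]
  refine cond_transfer (finSuccEquiv k 2).toRingEquiv
    (I' := (Ideal.span {(X 0 : MvPolynomial (Fin 2) k)^2 - (X 1)^2}).map
      (Polynomial.C : _ →+* _)) hEa ?_ ?_
  · rw [Ideal.map_span, Set.image_singleton, hEb, Ideal.map_span, Set.image_singleton]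
  · exact fun u hu => lemT0 _ (Polynomial.monic_X_pow_sub_C _ (by norm_num)) u hu

-- N3 : in k[Y0,Y1,Y2], Y2^4 regular mod (Y1²-Y2², Y0²-Y2²)

lemma claimN3 : ∀ v : MvPolynomial (Fin 3) k,
    (X 2)^4 * v ∈ Ideal.span {(X 1)^2 - (X 2)^2, (X 0)^2 - (X 2)^2} →
    v ∈ Ideal.span {(X 1 : MvPolynomial (Fin 3) k)^2 - (X 2)^2, (X 0)^2 - (X 2)^2} := by
  have h1 : (X 1 : MvPolynomial (Fin 3) k) = X ((0 : Fin 2).succ) := rfl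
  have h2 : (X 2 : MvPolynomial (Fin 3) k) = X ((1 : Fin 2).succ) := rfl
  have hEa : (finSuccEquiv k 2).toRingEquiv ((X 2 : MvPolynomial (Fin 3) k)^4)
      = Polynomial.C ((X 1 : MvPolynomial (Fin 2) k)^4) := by
    show (finSuccEquiv k 2) _ = _
    rw [map_pow, h2, finSuccEquiv_X_succ, ← Polynomial.C_pow]
  have hEb : (finSuccEquiv k 2).toRingEquiv ((X 1 : MvPolynomial (Fin 3) k)^2 - (X 2)^2)
      = Polynomial.C ((X 0 : MvPolynomial (Fin 2) k)^2 - (X 1)^2) := by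
    show (finSuccEquiv k 2) _ = _
    rw [map_sub, map_pow, map_pow, h1, h2, finSuccEquiv_X_succ, finSuccEquiv_X_succ,
      ← Polynomial.C_pow, ← Polynomial.C_pow, ← Polynomial.C_sub]
  have hEm : (finSuccEquiv k 2).toRingEquiv ((X 0 : MvPolynomial (Fin 3) k)^2 - (X 2)^2)
      = Polynomial.X^2 - Polynomial.C ((X 1 : MvPolynomial (Fin 2) k)^2) := by
    show (finSuccEquiv k 2) _ = _
    rw [map_sub, map_pow, map_pow, h2, finSuccEquiv_X_succ, finSuccEquiv_X_zero,
      ← Polynomial.C_pow]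
  refine cond_transfer (finSuccEquiv k 2).toRingEquiv
    (I' := (Ideal.span {(X 0 : MvPolynomial (Fin 2) k)^2 - (X 1)^2}).map
        (Polynomial.C : _ →+* _) ⊔
      Ideal.span {Polynomial.X^2 - Polynomial.C ((X 1 : MvPolynomial (Fin 2) k)^2)})
    hEa ?_ ?_
  · rw [Ideal.map_span, Set.image_insert_eq, Set.image_singleton, hEb, hEm,
      Ideal.span_insert, Ideal.map_span, Set.image_singleton]
  · exact fun u hu => lemT2 _ (claimN2 k) (Polynomial.monic_X_pow_sub_C _ (by norm_num)) u hu

lemma claimK1 : ∀ x : MvPolynomial (Fin 4) k,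
    ((X 1)^2 - (X 3)^2) * x ∈ Ideal.span {(X 2)^2 - (X 3)^2} →
    x ∈ Ideal.span {(X 2 : MvPolynomial (Fin 4) k)^2 - (X 3)^2} := by
  have h1 : (X 1 : MvPolynomial (Fin 4) k) = X ((0 : Fin 3).succ) := rfl
  have h2 : (X 2 : MvPolynomial (Fin 4) k) = X ((1 : Fin 3).succ) := rfl
  have h3 : (X 3 : MvPolynomial (Fin 4) k) = X ((2 : Fin 3).succ) := rfl
  have hEa : (finSuccEquiv k 3).toRingEquiv ((X 1 : MvPolynomial (Fin 4) k)^2 - (X 3)^2)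
      = Polynomial.C ((X 0 : MvPolynomial (Fin 3) k)^2 - (X 2)^2) := by
    show (finSuccEquiv k 3) _ = _
    rw [map_sub, map_pow, map_pow, h1, h3, finSuccEquiv_X_succ, finSuccEquiv_X_succ,
      ← Polynomial.C_pow, ← Polynomial.C_pow, ← Polynomial.C_sub]
  have hEb : (finSuccEquiv k 3).toRingEquiv ((X 2 : MvPolynomial (Fin 4) k)^2 - (X 3)^2)
      = Polynomial.C ((X 1 : MvPolynomial (Fin 3) k)^2 - (X 2)^2) := by
    show (finSuccEquiv k 3) _ = _
    rw [map_sub, map_pow, map_pow, h2, h3, finSuccEquiv_X_succ, finSuccEquiv_X_succ,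
      ← Polynomial.C_pow, ← Polynomial.C_pow, ← Polynomial.C_sub]
  refine cond_transfer (finSuccEquiv k 3).toRingEquiv
    (I' := (Ideal.span {(X 1 : MvPolynomial (Fin 3) k)^2 - (X 2)^2}).map
      (Polynomial.C : _ →+* _)) hEa ?_ ?_
  · rw [Ideal.map_span, Set.image_singleton, hEb, Ideal.map_span, Set.image_singleton]
  · exact fun u hu => lemT1 _ (claimN1' k) u hu

-- K2 : (z0²-z3²) regular mod (z2²-z3², z1²-z3²)

lemma claimK2 : ∀ x : MvPolynomial (Fin 4) k,
    ((X 0)^2 - (X 3)^2) * x ∈ Ideal.span {(X 2)^2 - (X 3)^2, (X 1)^2 - (X 3)^2} →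
    x ∈ Ideal.span {(X 2 : MvPolynomial (Fin 4) k)^2 - (X 3)^2, (X 1)^2 - (X 3)^2} := by
  have h1 : (X 1 : MvPolynomial (Fin 4) k) = X ((0 : Fin 3).succ) := rfl
  have h2 : (X 2 : MvPolynomial (Fin 4) k) = X ((1 : Fin 3).succ) := rfl
  have h3 : (X 3 : MvPolynomial (Fin 4) k) = X ((2 : Fin 3).succ) := rfl
  have hEa : (finSuccEquiv k 3).toRingEquiv ((X 0 : MvPolynomial (Fin 4) k)^2 - (X 3)^2)
      = Polynomial.X^2 - Polynomial.C ((X 2 : MvPolynomial (Fin 3) k)^2) := by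
    show (finSuccEquiv k 3) _ = _
    rw [map_sub, map_pow, map_pow, h3, finSuccEquiv_X_succ, finSuccEquiv_X_zero,
      ← Polynomial.C_pow]
  have hEb : (finSuccEquiv k 3).toRingEquiv ((X 2 : MvPolynomial (Fin 4) k)^2 - (X 3)^2)
      = Polynomial.C ((X 1 : MvPolynomial (Fin 3) k)^2 - (X 2)^2) := by
    show (finSuccEquiv k 3) _ = _
    rw [map_sub, map_pow, map_pow, h2, h3, finSuccEquiv_X_succ, finSuccEquiv_X_succ,
      ← Polynomial.C_pow, ← Polynomial.C_pow, ← Polynomial.C_sub]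
  have hEc : (finSuccEquiv k 3).toRingEquiv ((X 1 : MvPolynomial (Fin 4) k)^2 - (X 3)^2)
      = Polynomial.C ((X 0 : MvPolynomial (Fin 3) k)^2 - (X 2)^2) := by
    show (finSuccEquiv k 3) _ = _
    rw [map_sub, map_pow, map_pow, h1, h3, finSuccEquiv_X_succ, finSuccEquiv_X_succ,
      ← Polynomial.C_pow, ← Polynomial.C_pow, ← Polynomial.C_sub]
  refine cond_transfer (finSuccEquiv k 3).toRingEquiv
    (I' := (Ideal.span {(X 1 : MvPolynomial (Fin 3) k)^2 - (X 2)^2,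
        (X 0)^2 - (X 2)^2}).map (Polynomial.C : _ →+* _)) hEa ?_ ?_
  · rw [Ideal.map_span, Set.image_insert_eq, Set.image_singleton, hEb, hEc,
      Ideal.map_span, Set.image_insert_eq, Set.image_singleton]
  · exact fun u hu => lemT0 _ (Polynomial.monic_X_pow_sub_C _ (by norm_num)) u hu

-- P : z0*z3² regular mod (z2²-z3², z1²-z3², z0²-z3²)

lemma claimP : ∀ x : MvPolynomial (Fin 4) k,
    (X 0 * (X 3)^2) * x ∈
      Ideal.span {(X 2)^2 - (X 3)^2, (X 1)^2 - (X 3)^2, (X 0)^2 - (X 3)^2} →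
    x ∈ Ideal.span {(X 2 : MvPolynomial (Fin 4) k)^2 - (X 3)^2, (X 1)^2 - (X 3)^2,
      (X 0)^2 - (X 3)^2} := by
  have h1 : (X 1 : MvPolynomial (Fin 4) k) = X ((0 : Fin 3).succ) := rfl
  have h2 : (X 2 : MvPolynomial (Fin 4) k) = X ((1 : Fin 3).succ) := rfl
  have h3 : (X 3 : MvPolynomial (Fin 4) k) = X ((2 : Fin 3).succ) := rfl
  have hEa : (finSuccEquiv k 3).toRingEquiv ((X 0 : MvPolynomial (Fin 4) k) * (X 3)^2)
      = Polynomial.X * Polynomial.C ((X 2 : MvPolynomial (Fin 3) k)^2) := by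
    show (finSuccEquiv k 3) _ = _
    rw [map_mul, map_pow, h3, finSuccEquiv_X_succ, finSuccEquiv_X_zero, ← Polynomial.C_pow]
  have hEb : (finSuccEquiv k 3).toRingEquiv ((X 2 : MvPolynomial (Fin 4) k)^2 - (X 3)^2)
      = Polynomial.C ((X 1 : MvPolynomial (Fin 3) k)^2 - (X 2)^2) := by
    show (finSuccEquiv k 3) _ = _
    rw [map_sub, map_pow, map_pow, h2, h3, finSuccEquiv_X_succ, finSuccEquiv_X_succ,
      ← Polynomial.C_pow, ← Polynomial.C_pow, ← Polynomial.C_sub]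
  have hEc : (finSuccEquiv k 3).toRingEquiv ((X 1 : MvPolynomial (Fin 4) k)^2 - (X 3)^2)
      = Polynomial.C ((X 0 : MvPolynomial (Fin 3) k)^2 - (X 2)^2) := by
    show (finSuccEquiv k 3) _ = _
    rw [map_sub, map_pow, map_pow, h1, h3, finSuccEquiv_X_succ, finSuccEquiv_X_succ,
      ← Polynomial.C_pow, ← Polynomial.C_pow, ← Polynomial.C_sub]
  have hEm : (finSuccEquiv k 3).toRingEquiv ((X 0 : MvPolynomial (Fin 4) k)^2 - (X 3)^2)
      = Polynomial.X^2 - Polynomial.C ((X 2 : MvPolynomial (Fin 3) k)^2) := by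
    show (finSuccEquiv k 3) _ = _
    rw [map_sub, map_pow, map_pow, h3, finSuccEquiv_X_succ, finSuccEquiv_X_zero,
      ← Polynomial.C_pow]
  refine cond_transfer (finSuccEquiv k 3).toRingEquiv
    (I' := (Ideal.span {(X 1 : MvPolynomial (Fin 3) k)^2 - (X 2)^2,
        (X 0)^2 - (X 2)^2}).map (Polynomial.C : _ →+* _) ⊔
      Ideal.span {Polynomial.X^2 - Polynomial.C ((X 2 : MvPolynomial (Fin 3) k)^2)})
    hEa ?_ ?_
  · rw [Ideal.map_span, Set.image_insert_eq, Set.image_insert_eq, Set.image_singleton,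
      hEb, hEc, hEm, Ideal.map_span, Set.image_insert_eq, Set.image_singleton,
      Ideal.span_insert, Ideal.span_insert, Ideal.span_insert, sup_assoc]
  · intro u hu
    set s : MvPolynomial (Fin 3) k := (X 2)^2 with hs
    set I' := (Ideal.span {(X 1 : MvPolynomial (Fin 3) k)^2 - (X 2)^2,
        (X 0)^2 - (X 2)^2}).map (Polynomial.C : _ →+* _) ⊔
      Ideal.span {Polynomial.X^2 - Polynomial.C s} with hI'
    have hm : (Polynomial.X^2 - Polynomial.C s) ∈ I' :=
      Submodule.mem_sup_right (Ideal.subset_span rfl)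
    have hkey : Polynomial.C ((X 2 : MvPolynomial (Fin 3) k)^4) * u ∈ I' := by
      have h4 : ((X 2 : MvPolynomial (Fin 3) k)^4) = s * s := by rw [hs]; ring
      have e1 : Polynomial.C ((X 2 : MvPolynomial (Fin 3) k)^4) * u
          = Polynomial.X * (Polynomial.X * Polynomial.C s * u)
            - (Polynomial.X^2 - Polynomial.C s) * (Polynomial.C s * u) := by
        rw [h4, Polynomial.C_mul]; ring
      rw [e1]
      exact Submodule.sub_mem _ (I'.mul_mem_left _ hu) (I'.mul_mem_right _ hm)
    exact lemT2 _ (claimN3 k) (Polynomial.monic_X_pow_sub_C _ (by norm_num)) u hkey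

-- K3 : z0³ regular mod (z2²-z3², z1²-z3², z0²-z3²)

lemma claimK3 : ∀ x : MvPolynomial (Fin 4) k,
    ((X 0)^3) * x ∈
      Ideal.span {(X 2)^2 - (X 3)^2, (X 1)^2 - (X 3)^2, (X 0)^2 - (X 3)^2} →
    x ∈ Ideal.span {(X 2 : MvPolynomial (Fin 4) k)^2 - (X 3)^2, (X 1)^2 - (X 3)^2,
      (X 0)^2 - (X 3)^2} := by
  intro x hx
  set J := Ideal.span {(X 2 : MvPolynomial (Fin 4) k)^2 - (X 3)^2, (X 1)^2 - (X 3)^2,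
      (X 0)^2 - (X 3)^2} with hJ
  have hg : ((X 0 : MvPolynomial (Fin 4) k)^2 - (X 3)^2) ∈ J :=
    Ideal.subset_span (by simp)
  have key : (X 0 * (X 3)^2) * x ∈ J := by
    have e1 : (X 0 * (X 3)^2) * x
        = (X 0)^3 * x - ((X 0 : MvPolynomial (Fin 4) k)^2 - (X 3)^2) * (X 0 * x) := by
      ring
    rw [e1]
    exact Submodule.sub_mem _ hx (J.mul_mem_right _ hg)
  exact claimP k x key

lemma E01g1 : rename ⇑(Equiv.swap (0:Fin 4) 1) g1e = -g1e := by
  simp [map_mul, map_sub, rename_X, Equiv.swap_apply_def]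
  try ring
lemma E01g2 : rename ⇑(Equiv.swap (0:Fin 4) 1) g2e = g2e - g1e := by
  simp [map_mul, map_sub, rename_X, Equiv.swap_apply_def]
  try ring
lemma E02g1 : rename ⇑(Equiv.swap (0:Fin 4) 2) g1e = g1e - g2e := by
  simp [map_mul, map_sub, rename_X, Equiv.swap_apply_def]
  try ring
lemma E02g2 : rename ⇑(Equiv.swap (0:Fin 4) 2) g2e = -g2e := by
  simp [map_mul, map_sub, rename_X, Equiv.swap_apply_def]
  try ring
lemma E03g1 : rename ⇑(Equiv.swap (0:Fin 4) 3) g1e = g2e := by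
  simp [map_mul, map_sub, rename_X, Equiv.swap_apply_def]
  try ring
lemma E03g2 : rename ⇑(Equiv.swap (0:Fin 4) 3) g2e = g1e := by
  simp [map_mul, map_sub, rename_X, Equiv.swap_apply_def]
  try ring
lemma E12g1 : rename ⇑(Equiv.swap (1:Fin 4) 2) g1e = g2e := by
  simp [map_mul, map_sub, rename_X, Equiv.swap_apply_def]
  try ring
lemma E12g2 : rename ⇑(Equiv.swap (1:Fin 4) 2) g2e = g1e := by
  simp [map_mul, map_sub, rename_X, Equiv.swap_apply_def]
  try ring
lemma E13g1 : rename ⇑(Equiv.swap (1:Fin 4) 3) g1e = g1e - g2e := by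
  simp [map_mul, map_sub, rename_X, Equiv.swap_apply_def]
  try ring
lemma E13g2 : rename ⇑(Equiv.swap (1:Fin 4) 3) g2e = -g2e := by
  simp [map_mul, map_sub, rename_X, Equiv.swap_apply_def]
  try ring
lemma E23g1 : rename ⇑(Equiv.swap (2:Fin 4) 3) g1e = -g1e := by
  simp [map_mul, map_sub, rename_X, Equiv.swap_apply_def]
  try ring
lemma E23g2 : rename ⇑(Equiv.swap (2:Fin 4) 3) g2e = g2e - g1e := by
  simp [map_mul, map_sub, rename_X, Equiv.swap_apply_def]
  try ring


lemma hW1 : g1e ∈ We := Submodule.subset_span (by simp)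
lemma hW2 : g2e ∈ We := Submodule.subset_span (by simp)

lemma img_swap : ∀ i j : Fin 4,
    rename ⇑(Equiv.swap i j) g1e ∈ We ∧ rename ⇑(Equiv.swap i j) g2e ∈ We := by
  have w1 := hW1 k; have w2 := hW2 k
  have D1 : ∀ i : Fin 4, rename ⇑(Equiv.swap i i) g1e ∈ We ∧
      rename ⇑(Equiv.swap i i) g2e ∈ We := by
    intro i
    simp only [Equiv.swap_self, Equiv.coe_refl, rename_id]
    exact ⟨w1, w2⟩
  have key : ∀ i j : Fin 4, i < j →
      rename ⇑(Equiv.swap i j) g1e ∈ We ∧ rename ⇑(Equiv.swap i j) g2e ∈ We := by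
    intro i j hij
    fin_cases i <;> fin_cases j
    · exact absurd hij (by decide)
    · refine ⟨?_, ?_⟩
      · show rename ⇑(Equiv.swap (0:Fin 4) 1) g1e ∈ We
        rw [E01g1 k]; exact neg_mem w1
      · show rename ⇑(Equiv.swap (0:Fin 4) 1) g2e ∈ We
        rw [E01g2 k]; exact Submodule.sub_mem _ w2 w1
    · refine ⟨?_, ?_⟩
      · show rename ⇑(Equiv.swap (0:Fin 4) 2) g1e ∈ We
        rw [E02g1 k]; exact Submodule.sub_mem _ w1 w2
      · show rename ⇑(Equiv.swap (0:Fin 4) 2) g2e ∈ We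
        rw [E02g2 k]; exact neg_mem w2
    · refine ⟨?_, ?_⟩
      · show rename ⇑(Equiv.swap (0:Fin 4) 3) g1e ∈ We
        rw [E03g1 k]; exact w2
      · show rename ⇑(Equiv.swap (0:Fin 4) 3) g2e ∈ We
        rw [E03g2 k]; exact w1
    · exact absurd hij (by decide)
    · exact absurd hij (by decide)
    · refine ⟨?_, ?_⟩
      · show rename ⇑(Equiv.swap (1:Fin 4) 2) g1e ∈ We
        rw [E12g1 k]; exact w2
      · show rename ⇑(Equiv.swap (1:Fin 4) 2) g2e ∈ We
        rw [E12g2 k]; exact w1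
    · refine ⟨?_, ?_⟩
      · show rename ⇑(Equiv.swap (1:Fin 4) 3) g1e ∈ We
        rw [E13g1 k]; exact Submodule.sub_mem _ w1 w2
      · show rename ⇑(Equiv.swap (1:Fin 4) 3) g2e ∈ We
        rw [E13g2 k]; exact neg_mem w2
    · exact absurd hij (by decide)
    · exact absurd hij (by decide)
    · exact absurd hij (by decide)
    · refine ⟨?_, ?_⟩
      · show rename ⇑(Equiv.swap (2:Fin 4) 3) g1e ∈ We
        rw [E23g1 k]; exact neg_mem w1
      · show rename ⇑(Equiv.swap (2:Fin 4) 3) g2e ∈ We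
        rw [E23g2 k]; exact Submodule.sub_mem _ w2 w1
    · exact absurd hij (by decide)
    · exact absurd hij (by decide)
    · exact absurd hij (by decide)
    · exact absurd hij (by decide)
  intro i j
  rcases lt_trichotomy i j with h | h | h
  · exact key i j h
  · exact h ▸ D1 i
  · rw [Equiv.swap_comm]; exact key j i h

lemma swap_stable : ∀ (i j : Fin 4), ∀ p ∈ We, rename ⇑(Equiv.swap i j) p ∈ We := by
  intro i j p hp
  induction hp using Submodule.span_induction with
  | mem x hx =>
      rcases hx with rfl | hx
      · exact (img_swap k i j).1
      · rw [Set.mem_singleton_iff] at hx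
        subst hx
        exact (img_swap k i j).2
  | zero => simp only [map_zero]; exact Submodule.zero_mem _
  | add x y hx hy ihx ihy => rw [map_add]; exact Submodule.add_mem _ ihx ihy
  | smul a x hx ihx => rw [map_smul]; exact Submodule.smul_mem _ _ ihx

lemma stableW : Stable (We) := by
  intro σ
  refine Equiv.Perm.swap_induction_on σ ?_ ?_
  · intro p hp; simpa [rename_id] using hp
  · intro f x y hxy ih p hp
    have h1 : ⇑(Equiv.swap x y * f) = ⇑(Equiv.swap x y) ∘ ⇑f := rfl
    rw [h1, ← rename_rename]
    exact swap_stable k x y _ (ih p hp)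

lemma linIndep : LinearIndependent k ![g1e, g2e] := by
  rw [LinearIndependent.pair_iff]
  intro s t hst
  have h1 := congrArg (eval ![(1:k),0,1,0]) hst
  have h2 := congrArg (eval ![(0:k),0,1,-1]) hst
  simp only [map_add, smul_eq_C_mul, map_mul, map_sub, eval_C, eval_X, map_zero] at h1 h2
  norm_num [Matrix.cons_val_zero, Matrix.cons_val_one, Matrix.cons_val_two, Matrix.cons_val_three] at h1 h2
  exact ⟨h1, h2⟩

lemma finrankW : Module.finrank k (We) = 2 := by
  have h := finrank_span_eq_card (R := k) (linIndep k)
  rw [Matrix.range_cons_cons_empty] at h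
  rw [h]
  simp

lemma irredW : ∀ U ≤ (We), Stable U → U = ⊥ ∨ U = (We) := by
  intro U hU hstab
  by_cases hbot : U = ⊥
  · exact Or.inl hbot
  right
  obtain ⟨p, hpU, hpne⟩ := (Submodule.ne_bot_iff U).1 hbot
  obtain ⟨a, b, hab⟩ := Submodule.mem_span_pair.1 (hU hpU)
  -- images of p
  have hqU : rename ⇑(Equiv.swap (1:Fin 4) 2) p ∈ U := hstab _ p hpU
  have hrU : rename ⇑(Equiv.swap (0:Fin 4) 1) p ∈ U := hstab _ p hpU
  have hqeq : b • g1e + a • g2e = rename ⇑(Equiv.swap (1:Fin 4) 2) p := by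
    rw [← hab, map_add, map_smul, map_smul, E12g1 k, E12g2 k]
    module
  have hreq : (-(a+b)) • g1e + b • g2e = rename ⇑(Equiv.swap (0:Fin 4) 1) p := by
    rw [← hab, map_add, map_smul, map_smul, E01g1 k, E01g2 k]
    module
  -- extraction helper
  have extract : ∀ (c1 c2 d1 d2 : k) (u v : R4), u ∈ U → v ∈ U →
      c1 • g1e + c2 • g2e = u → d1 • g1e + d2 • g2e = v →
      c1 * d2 - c2 * d1 ≠ 0 → U = We := by
    intro c1 c2 d1 d2 u v huU hvU hu hv hdet
    have hg1 : (c1 * d2 - c2 * d1) • g1e = d2 • u - c2 • v := by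
      rw [← hu, ← hv]; module
    have hg2 : (c1 * d2 - c2 * d1) • g2e = c1 • v - d1 • u := by
      rw [← hu, ← hv]; module
    have hm1 : g1e ∈ U := by
      have hin : (c1 * d2 - c2 * d1) • g1e ∈ U := by
        rw [hg1]; exact Submodule.sub_mem _ (Submodule.smul_mem _ _ huU)
          (Submodule.smul_mem _ _ hvU)
      have := Submodule.smul_mem _ (c1 * d2 - c2 * d1)⁻¹ hin
      rwa [smul_smul, inv_mul_cancel₀ hdet, one_smul] at this
    have hm2 : g2e ∈ U := by
      have hin : (c1 * d2 - c2 * d1) • g2e ∈ U := by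
        rw [hg2]; exact Submodule.sub_mem _ (Submodule.smul_mem _ _ hvU)
          (Submodule.smul_mem _ _ huU)
      have := Submodule.smul_mem _ (c1 * d2 - c2 * d1)⁻¹ hin
      rwa [smul_smul, inv_mul_cancel₀ hdet, one_smul] at this
    refine le_antisymm hU ?_
    rw [Submodule.span_le]
    rintro x (rfl | hx)
    · exact hm1
    · rw [Set.mem_singleton_iff] at hx; subst hx; exact hm2
  have habne : ¬(a = 0 ∧ b = 0) := by
    rintro ⟨rfl, rfl⟩
    apply hpne
    rw [← hab]; simp
  by_cases hdet1 : a * a - b * b ≠ 0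
  · exact extract a b b a p _ hpU hqU hab hqeq hdet1
  · push_neg at hdet1
    have hane : a ≠ 0 := by
      intro ha
      subst ha
      simp only [zero_mul, zero_sub, neg_eq_zero, mul_self_eq_zero] at hdet1
      exact habne ⟨rfl, hdet1⟩
    have hcases : b = a ∨ b = -a := by
      have : (a - b) * (a + b) = 0 := by linear_combination hdet1
      rcases mul_eq_zero.1 this with h | h
      · left; exact (sub_eq_zero.1 h).symm
      · right; exact eq_neg_of_add_eq_zero_right h
    have hdet2 : a * b - b * (-(a+b)) ≠ 0 := by
      rcases hcases with rfl | rfl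
      · intro h
        apply hane
        have h3 : (3:k) * (b*b) = 0 := by linear_combination h
        rcases mul_eq_zero.1 h3 with h' | h'
        · exact absurd h' (by norm_num)
        · exact mul_self_eq_zero.1 h'
      · intro h
        apply hane
        have h3 : a * a = 0 := by linear_combination -h
        exact mul_self_eq_zero.1 h3
    exact extract a b (-(a+b)) b p _ hpU hrU hab hreq hdet2


lemma ofList_smul_top {R : Type*} [CommRing R] (l : List R) :
    (Ideal.ofList l • ⊤ : Submodule R R) = Ideal.ofList l := by
  rw [Ideal.smul_eq_mul, Ideal.mul_top]

lemma unitC {c : k} (hc : c ≠ 0) : IsUnit ((C c : R4)) :=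
  (isUnit_iff_ne_zero.2 hc).map (C : k →+* R4)

lemma unit4 : IsUnit ((4 : R4)) := by
  rw [show ((4:R4)) = C (4:k) from (map_ofNat (C : k →+* R4) 4).symm]
  exact unitC k (by norm_num)
lemma unit2 : IsUnit ((2 : R4)) := by
  rw [show ((2:R4)) = C (2:k) from (map_ofNat (C : k →+* R4) 2).symm]
  exact unitC k (by norm_num)
lemma unit3 : IsUnit ((3 : R4)) := by
  rw [show ((3:R4)) = C (3:k) from (map_ofNat (C : k →+* R4) 3).symm]
  exact unitC k (by norm_num)
lemma unit64 : IsUnit ((64 : R4)) := by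
  rw [show ((64:R4)) = C (64:k) from (map_ofNat (C : k →+* R4) 64).symm]
  exact unitC k (by norm_num)

lemma cond1 : ∀ x : R4, ((X 0 - X 1) * (X 2 - X 3) : R4) * x ∈ (⊥ : Submodule R4 R4) →
    x ∈ (⊥ : Submodule R4 R4) := by
  intro x hx
  rw [Submodule.mem_bot] at hx ⊢
  rcases mul_eq_zero.1 hx with h | h
  · exfalso
    have := congrArg (eval ![(1:k),0,1,0]) h
    simp at this
  · exact h

lemma cond2 : ∀ x : R4, ((X 0 - X 2) * (X 1 - X 3) : R4) * x ∈
    Ideal.span {((X 0 - X 1) * (X 2 - X 3) : R4)} →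
    x ∈ Ideal.span {((X 0 - X 1) * (X 2 - X 3) : R4)} := by
  refine cond_transfer (zEquiv k).toRingEquiv (hEg2 k)
    (I' := Ideal.span {(X 2 : R4)^2 - (X 3)^2}) ?_
    (unit_mul_cond (unit4 k) _ (claimK1 k))
  rw [Ideal.map_span, Set.image_singleton]
  rw [show ⇑(zEquiv k).toRingEquiv ((X 0 - X 1) * (X 2 - X 3) : R4)
      = 4 * ((X 2 : R4)^2 - (X 3)^2) from hEg1 k]
  rw [Ideal.span_singleton_mul_left_unit (unit4 k)]

lemma cond3 : ∀ x : R4, (esymm (Fin 4) k 2) * x ∈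
    Ideal.span {((X 0 - X 1) * (X 2 - X 3) : R4), (X 0 - X 2) * (X 1 - X 3)} →
    x ∈ Ideal.span {((X 0 - X 1) * (X 2 - X 3) : R4), (X 0 - X 2) * (X 1 - X 3)} := by
  have core : ∀ y : R4, (3*(X 0 : R4)^2 - (X 1)^2 - (X 2)^2 - (X 3)^2) * y ∈
      Ideal.span {(X 2 : R4)^2 - (X 3)^2, (X 1)^2 - (X 3)^2} →
      y ∈ Ideal.span {(X 2 : R4)^2 - (X 3)^2, (X 1)^2 - (X 3)^2} := by
    intro y hy
    have m1 : ((X 2:R4)^2 - (X 3)^2) ∈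
        Ideal.span {(X 2 : R4)^2 - (X 3)^2, (X 1)^2 - (X 3)^2} :=
      Ideal.subset_span (Set.mem_insert _ _)
    have m2 : ((X 1:R4)^2 - (X 3)^2) ∈
        Ideal.span {(X 2 : R4)^2 - (X 3)^2, (X 1)^2 - (X 3)^2} :=
      Ideal.subset_span (Set.mem_insert_of_mem _ rfl)
    have h3 : ((3:R4) * ((X 0:R4)^2 - (X 3)^2)) * y ∈
        Ideal.span {(X 2 : R4)^2 - (X 3)^2, (X 1)^2 - (X 3)^2} := by
      have e1 : ((3:R4) * ((X 0:R4)^2 - (X 3)^2)) * y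
          = (3*(X 0 : R4)^2 - (X 1)^2 - (X 2)^2 - (X 3)^2) * y
            + ((X 1:R4)^2 - (X 3)^2) * y + ((X 2:R4)^2 - (X 3)^2) * y := by ring
      rw [e1]
      exact add_mem (add_mem hy (Ideal.mul_mem_right _ _ m2)) (Ideal.mul_mem_right _ _ m1)
    exact unit_mul_cond (unit3 k) _ (claimK2 k) y h3
  refine cond_transfer (zEquiv k).toRingEquiv (hEe2 k)
    (I' := Ideal.span {(X 2 : R4)^2 - (X 3)^2, (X 1)^2 - (X 3)^2}) ?_
    (unit_mul_cond (unit2 k) _ core)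
  rw [Ideal.map_span, Set.image_insert_eq, Set.image_singleton]
  rw [show ⇑(zEquiv k).toRingEquiv ((X 0 - X 1) * (X 2 - X 3) : R4)
      = 4 * ((X 2 : R4)^2 - (X 3)^2) from hEg1 k]
  rw [show ⇑(zEquiv k).toRingEquiv ((X 0 - X 2) * (X 1 - X 3) : R4)
      = 4 * ((X 1 : R4)^2 - (X 3)^2) from hEg2 k]
  rw [Ideal.span_insert, Ideal.span_singleton_mul_left_unit (unit4 k),
    Ideal.span_singleton_mul_left_unit (unit4 k), ← Ideal.span_insert]

lemma hC3 : (C (3⁻¹ : k) : R4) * 3 = 1 := by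
  rw [show ((3 : R4)) = C (3 : k) from (map_ofNat (C : k →+* R4) 3).symm, ← C_mul]
  norm_num

lemma spanEq : Ideal.span {(X 2 : R4)^2 - (X 3)^2, (X 1)^2 - (X 3)^2,
      3*(X 0 : R4)^2 - (X 1)^2 - (X 2)^2 - (X 3)^2}
    = Ideal.span {(X 2 : R4)^2 - (X 3)^2, (X 1)^2 - (X 3)^2, (X 0)^2 - (X 3)^2} := by
  refine le_antisymm (Ideal.span_le.2 ?_) (Ideal.span_le.2 ?_)
  · intro x hx
    simp only [Set.mem_insert_iff, Set.mem_singleton_iff] at hx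
    rcases hx with rfl | rfl | rfl
    · exact Ideal.subset_span (Set.mem_insert _ _)
    · exact Ideal.subset_span (Set.mem_insert_of_mem _ (Set.mem_insert _ _))
    · rw [show (3*(X 0 : R4)^2 - (X 1)^2 - (X 2)^2 - (X 3)^2)
          = (3:R4)*((X 0 : R4)^2-(X 3)^2) - ((X 1:R4)^2-(X 3)^2) - ((X 2:R4)^2-(X 3)^2)
          from by ring]
      exact sub_mem (sub_mem (Ideal.mul_mem_left _ _
          (Ideal.subset_span (Set.mem_insert_of_mem _ (Set.mem_insert_of_mem _ rfl))))
        (Ideal.subset_span (Set.mem_insert_of_mem _ (Set.mem_insert _ _))))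
        (Ideal.subset_span (Set.mem_insert _ _))
  · intro x hx
    simp only [Set.mem_insert_iff, Set.mem_singleton_iff] at hx
    rcases hx with rfl | rfl | rfl
    · exact Ideal.subset_span (Set.mem_insert _ _)
    · exact Ideal.subset_span (Set.mem_insert_of_mem _ (Set.mem_insert _ _))
    · have h3 := hC3 k
      rw [show ((X 0 : R4)^2 - (X 3)^2) = C (3⁻¹:k) *
          ((3*(X 0 : R4)^2 - (X 1)^2 - (X 2)^2 - (X 3)^2)
            + ((X 1:R4)^2 - (X 3)^2) + ((X 2:R4)^2 - (X 3)^2))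
          from by linear_combination (-((X 0 : R4)^2 - (X 3)^2)) * h3]
      exact Ideal.mul_mem_left _ _ (add_mem (add_mem
        (Ideal.subset_span (Set.mem_insert_of_mem _ (Set.mem_insert_of_mem _ rfl)))
        (Ideal.subset_span (Set.mem_insert_of_mem _ (Set.mem_insert _ _))))
        (Ideal.subset_span (Set.mem_insert _ _)))

lemma cond4 : ∀ x : R4, ((esymm (Fin 4) k 1)^3) * x ∈
    Ideal.span {((X 0 - X 1) * (X 2 - X 3) : R4), (X 0 - X 2) * (X 1 - X 3),
      esymm (Fin 4) k 2} →
    x ∈ Ideal.span {((X 0 - X 1) * (X 2 - X 3) : R4), (X 0 - X 2) * (X 1 - X 3),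
      esymm (Fin 4) k 2} := by
  refine cond_transfer (zEquiv k).toRingEquiv (hEe13 k)
    (I' := Ideal.span {(X 2 : R4)^2 - (X 3)^2, (X 1)^2 - (X 3)^2, (X 0)^2 - (X 3)^2}) ?_
    (unit_mul_cond (unit64 k) _ (claimK3 k))
  rw [Ideal.map_span, Set.image_insert_eq, Set.image_insert_eq, Set.image_singleton]
  rw [show ⇑(zEquiv k).toRingEquiv ((X 0 - X 1) * (X 2 - X 3) : R4)
      = 4 * ((X 2 : R4)^2 - (X 3)^2) from hEg1 k]
  rw [show ⇑(zEquiv k).toRingEquiv ((X 0 - X 2) * (X 1 - X 3) : R4)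
      = 4 * ((X 1 : R4)^2 - (X 3)^2) from hEg2 k]
  rw [show ⇑(zEquiv k).toRingEquiv (esymm (Fin 4) k 2)
      = 2 * (3 * (X 0 : R4)^2 - (X 1)^2 - (X 2)^2 - (X 3)^2) from hEe2 k]
  rw [Ideal.span_insert, Ideal.span_insert,
    Ideal.span_singleton_mul_left_unit (unit4 k),
    Ideal.span_singleton_mul_left_unit (unit4 k),
    Ideal.span_singleton_mul_left_unit (unit2 k),
    ← Ideal.span_insert, ← Ideal.span_insert, spanEq]

lemma isRegX : RingTheory.Sequence.IsRegular R4
    [((X 0 - X 1) * (X 2 - X 3) : R4), (X 0 - X 2) * (X 1 - X 3),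
      esymm (Fin 4) k 2, (esymm (Fin 4) k 1)^3] := by
  constructor
  · constructor
    intro i hi
    have hi4 : i < 4 := by simpa using hi
    interval_cases i
    · rw [show (List.take 0 [((X 0 - X 1) * (X 2 - X 3) : R4), (X 0 - X 2) * (X 1 - X 3),
          esymm (Fin 4) k 2, (esymm (Fin 4) k 1)^3]) = [] from rfl]
      rw [show (Ideal.ofList ([] : List R4) • ⊤ : Submodule R4 R4) = ⊥ from by
        rw [ofList_smul_top]; simp]
      exact smulreg_of_cond _ _ (cond1 k)
    · rw [show (List.take 1 [((X 0 - X 1) * (X 2 - X 3) : R4), (X 0 - X 2) * (X 1 - X 3),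
          esymm (Fin 4) k 2, (esymm (Fin 4) k 1)^3])
          = [((X 0 - X 1) * (X 2 - X 3) : R4)] from rfl]
      rw [show (Ideal.ofList [((X 0 - X 1) * (X 2 - X 3) : R4)] • ⊤ : Submodule R4 R4)
          = Ideal.span {((X 0 - X 1) * (X 2 - X 3) : R4)} from by
        rw [ofList_smul_top]; simp [Ideal.ofList_cons]]
      exact smulreg_of_cond _ _ (cond2 k)
    · rw [show (List.take 2 [((X 0 - X 1) * (X 2 - X 3) : R4), (X 0 - X 2) * (X 1 - X 3),
          esymm (Fin 4) k 2, (esymm (Fin 4) k 1)^3])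
          = [((X 0 - X 1) * (X 2 - X 3) : R4), (X 0 - X 2) * (X 1 - X 3)] from rfl]
      rw [show (Ideal.ofList [((X 0 - X 1) * (X 2 - X 3) : R4), (X 0 - X 2) * (X 1 - X 3)]
            • ⊤ : Submodule R4 R4)
          = Ideal.span {((X 0 - X 1) * (X 2 - X 3) : R4), (X 0 - X 2) * (X 1 - X 3)} from by
        rw [ofList_smul_top]; simp [Ideal.ofList_cons, Ideal.span_insert]]
      exact smulreg_of_cond _ _ (cond3 k)
    · rw [show (List.take 3 [((X 0 - X 1) * (X 2 - X 3) : R4), (X 0 - X 2) * (X 1 - X 3),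
          esymm (Fin 4) k 2, (esymm (Fin 4) k 1)^3])
          = [((X 0 - X 1) * (X 2 - X 3) : R4), (X 0 - X 2) * (X 1 - X 3),
            esymm (Fin 4) k 2] from rfl]
      rw [show (Ideal.ofList [((X 0 - X 1) * (X 2 - X 3) : R4), (X 0 - X 2) * (X 1 - X 3),
            esymm (Fin 4) k 2] • ⊤ : Submodule R4 R4)
          = Ideal.span {((X 0 - X 1) * (X 2 - X 3) : R4), (X 0 - X 2) * (X 1 - X 3),
            esymm (Fin 4) k 2} from by
        rw [ofList_smul_top]; simp [Ideal.ofList_cons, Ideal.span_insert]]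
      exact smulreg_of_cond _ _ (cond4 k)
  · intro h
    have h1 : (1:R4) ∈ (Ideal.ofList [((X 0 - X 1) * (X 2 - X 3) : R4),
        (X 0 - X 2) * (X 1 - X 3), esymm (Fin 4) k 2, (esymm (Fin 4) k 1)^3] • ⊤ :
        Submodule R4 R4) := h ▸ Submodule.mem_top
    rw [ofList_smul_top] at h1
    have hle : Ideal.ofList [((X 0 - X 1) * (X 2 - X 3) : R4),
        (X 0 - X 2) * (X 1 - X 3), esymm (Fin 4) k 2, (esymm (Fin 4) k 1)^3]
        ≤ RingHom.ker (constantCoeff : R4 →+* k) := by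
      rw [show Ideal.ofList [((X 0 - X 1) * (X 2 - X 3) : R4),
          (X 0 - X 2) * (X 1 - X 3), esymm (Fin 4) k 2, (esymm (Fin 4) k 1)^3]
          = Ideal.span {((X 0 - X 1) * (X 2 - X 3) : R4),
            (X 0 - X 2) * (X 1 - X 3), esymm (Fin 4) k 2, (esymm (Fin 4) k 1)^3} from by
        simp [Ideal.ofList_cons, Ideal.span_insert]]
      rw [Ideal.span_le]
      intro p hp
      simp only [Set.mem_insert_iff, Set.mem_singleton_iff] at hp
      rcases hp with rfl | rfl | rfl | rfl
      · simp [RingHom.mem_ker]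
      · simp [RingHom.mem_ker]
      · rw [SetLike.mem_coe, RingHom.mem_ker, hesymm2]
        simp
      · rw [SetLike.mem_coe, RingHom.mem_ker, map_pow, hesymm1]
        simp
    have := hle h1
    rw [RingHom.mem_ker, map_one] at this
    exact one_ne_zero this

end Dev

/-- In `R = k[x_1,…,x_4]` over a field `k` of
characteristic zero, setting `g₁ = (x_1-x_2)(x_3-x_4)` and
`g₂ = (x_1-x_3)(x_2-x_4)`, the sequence `g₁, g₂, e_2, e_1^3` is a regular
sequence, and the `k`-span of `{g₁, g₂}` is an `S_4`-stable subspace of `R`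
isomorphic to the irreducible representation `S^{(2,2)}` (the unique
2-dimensional irreducible representation of `S_4`, so this is expressed by:
stable, 2-dimensional and irreducible). -/
theorem stmt16 {k : Type*} [Field k] [CharZero k]
    (g₁ g₂ : MvPolynomial (Fin 4) k)
    (hg₁ : g₁ = (X 0 - X 1) * (X 2 - X 3))
    (hg₂ : g₂ = (X 0 - X 2) * (X 1 - X 3)) :
    RingTheory.Sequence.IsRegular (MvPolynomial (Fin 4) k)
        [g₁, g₂, esymm (Fin 4) k 2, (esymm (Fin 4) k 1) ^ 3] ∧
      Stable (Submodule.span k {g₁, g₂}) ∧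
      Module.finrank k (Submodule.span k {g₁, g₂}) = 2 ∧
      (∀ U ≤ Submodule.span k {g₁, g₂}, Stable U →
        U = ⊥ ∨ U = Submodule.span k {g₁, g₂}) := by
  subst hg₁ hg₂
  exact ⟨isRegX k, stableW k, finrankW k, irredW k⟩

end
end
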